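/- Let {p_i, ρ_i}_{i=1}^m be an ensemble of linearly independent density operators on a d-dimensional Hilbert space (the subspaces Range(ρ_i) form a direct sum decomposition of the space, Σ rank ρ_i = d), and let {Π_i}_{i=1}^m be an orthogonal projective measurement with rank(Π_i) = rank(ρ_i). If (1) Π_j (p_j ρ_j − p_i ρ_i) Π_i = 0 for all i ≠ j, and (2) Σ_{j=1}^m p_j ρ_j Π_j is positive definite, then Σ_{j=1}^m p_j ρ_j Π_j − p_i ρ_i is positive semidefinite for every i. -/

import Mathlib

open Matrix BigOperators
open scoped ComplexOrder

/-- Simplified optimality conditions for linearly independent ensembles: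
conditions (1) and (2) imply `∑ j p j ρ j Π j ≥ p i ρ i` for all `i`. -/
theorem stmt_9 {d m : ℕ} (p : Fin m → ℝ) (ρ Pr : Fin m → Matrix (Fin d) (Fin d) ℂ)
    (hp : ∀ i, 0 < p i) (hpsum : ∑ i, p i = 1)
    (hρ : ∀ i, (ρ i).PosSemidef) (hρtr : ∀ i, (ρ i).trace = 1)
    (hindep : iSupIndep fun i => LinearMap.range (ρ i).mulVecLin)
    (hspan : (⨆ i, LinearMap.range (ρ i).mulVecLin) = ⊤)
    (hPrH : ∀ i, (Pr i).IsHermitian)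
    (hproj : ∀ i j, Pr i * Pr j = if i = j then Pr i else 0)
    (hPrsum : ∑ i, Pr i = 1)
    (hrank : ∀ i, (Pr i).rank = (ρ i).rank)
    (h1 : ∀ i j, i ≠ j → Pr j * ((p j : ℂ) • ρ j - (p i : ℂ) • ρ i) * Pr i = 0)
    (h2 : (∑ j, (p j : ℂ) • (ρ j * Pr j)).PosDef) :
    ∀ i, ((∑ j, (p j : ℂ) • (ρ j * Pr j)) - (p i : ℂ) • ρ i).PosSemidef := by
  intro i
  set Z : Matrix (Fin d) (Fin d) ℂ := ∑ j, (p j : ℂ) • (ρ j * Pr j) with hZdef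
  have hZpsd : Z.PosSemidef := h2.posSemidef
  open scoped MatrixOrder in
  set S : Matrix (Fin d) (Fin d) ℂ := CFC.sqrt Z with hSdef
  open scoped MatrixOrder in
  have hSpsd : S.PosSemidef := Matrix.nonneg_iff_posSemidef.mp (CFC.sqrt_nonneg Z)
  open scoped MatrixOrder in
  have hSS : S * S = Z := CFC.sqrt_mul_sqrt_self Z hZpsd.nonneg
  have hSdet : IsUnit S.det := by
    have hZdet : IsUnit Z.det := h2.det_pos.ne'.isUnit
    have : S.det * S.det = Z.det := by rw [← det_mul, hSS]
    rcases hZdet with ⟨u, hu⟩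
    exact IsUnit.of_mul_eq_one (S.det * u.inv) (by
      rw [← mul_assoc, this, ← hu]; exact u.mul_inv)
  have hSi : S * S⁻¹ = 1 := mul_nonsing_inv S hSdet
  have hiS : S⁻¹ * S = 1 := nonsing_inv_mul S hSdet
  have hSidet : IsUnit (S⁻¹).det := by
    rw [det_nonsing_inv]
    rw [← hSdet.unit_spec, Ring.inverse_unit]; exact Units.isUnit _
  -- key identity
  have hkey : Z * Pr i = ((p i : ℂ) • ρ i) * Pr i := by
    rw [hZdef, Finset.sum_mul]
    rw [Finset.sum_eq_single i]
    · rw [smul_mul_assoc, smul_mul_assoc, mul_assoc, hproj i i, if_pos rfl]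
    · intro j _ hj
      rw [smul_mul_assoc, mul_assoc, hproj j i, if_neg hj, mul_zero, smul_zero]
    · intro h; exact absurd (Finset.mem_univ i) h
  set A : Matrix (Fin d) (Fin d) ℂ := (p i : ℂ) • ρ i with hAdef
  have hAH : A.IsHermitian := by
    rw [hAdef, IsHermitian, conjTranspose_smul, (hρ i).isHermitian.eq]
    norm_num
  set R : Matrix (Fin d) (Fin d) ℂ := S⁻¹ * A * S⁻¹ with hRdef
  have hSiH : (S⁻¹).IsHermitian := hSpsd.isHermitian.inv
  have hRH : R.IsHermitian := by
    rw [hRdef, IsHermitian, conjTranspose_mul, conjTranspose_mul, hSiH.eq, hAH.eq, mul_assoc]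
  set E : Matrix (Fin d) (Fin d) ℂ := S * Pr i * S with hEdef
  have hRE : R * E = E := by
    calc R * E = S⁻¹ * A * (S⁻¹ * S) * Pr i * S := by
          rw [hRdef, hEdef]; noncomm_ring
    _ = S⁻¹ * (A * Pr i) * S := by rw [hiS]; noncomm_ring
    _ = S⁻¹ * (Z * Pr i) * S := by rw [hkey]
    _ = (S⁻¹ * S) * S * Pr i * S := by rw [← hSS]; noncomm_ring
    _ = E := by rw [hiS, hEdef, one_mul]
  -- rank computations
  have hrankE : E.rank = (Pr i).rank := by
    rw [hEdef, rank_mul_eq_left_of_isUnit_det S (S * Pr i) hSdet,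
      rank_mul_eq_right_of_isUnit_det S (Pr i) hSdet]
  have hrankA : A.rank = (ρ i).rank := by
    have : A = ((p i : ℂ) • (1 : Matrix (Fin d) (Fin d) ℂ)) * ρ i := by
      rw [smul_mul_assoc, one_mul]
    rw [this, rank_mul_eq_right_of_isUnit_det]
    rw [det_smul, det_one, mul_one]
    exact IsUnit.pow _ (isUnit_iff_ne_zero.2 (by exact_mod_cast (hp i).ne'))
  have hrankR : R.rank = A.rank := by
    rw [hRdef, rank_mul_eq_left_of_isUnit_det _ _ hSidet,
      rank_mul_eq_right_of_isUnit_det _ _ hSidet]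
  have hrangele : LinearMap.range E.mulVecLin ≤ LinearMap.range R.mulVecLin := by
    conv_lhs => rw [← hRE]
    rw [mulVecLin_mul]
    exact LinearMap.range_comp_le_range _ _
  have hrange : LinearMap.range E.mulVecLin = LinearMap.range R.mulVecLin := by
    apply Submodule.eq_of_le_of_finrank_le hrangele
    have : R.rank = E.rank := by rw [hrankR, hrankA, ← hrank i, ← hrankE]
    exact le_of_eq this
  have hRR : R * R = R := by
    have hfix : ∀ x : Fin d → ℂ, R *ᵥ (R *ᵥ x) = R *ᵥ x := by
      intro x
      have hv : R *ᵥ x ∈ LinearMap.range R.mulVecLin := ⟨x, rfl⟩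
      rw [← hrange] at hv
      obtain ⟨y, hy⟩ := hv
      have hy' : E *ᵥ y = R *ᵥ x := hy
      rw [← hy', mulVec_mulVec, hRE]
    ext a b
    have h := hfix (Pi.single b 1)
    rw [mulVec_mulVec] at h
    have h2' := congrFun h a
    simpa [mulVec_single] using h2'
  have hone : (1 - R).PosSemidef := by
    have hherm : (1 - R)ᴴ = 1 - R := by
      rw [conjTranspose_sub, conjTranspose_one, hRH.eq]
    have hsq : (1 - R)ᴴ * (1 - R) = 1 - R := by
      rw [hherm]
      calc (1 - R) * (1 - R) = 1 - R - (R - R * R) := by noncomm_ring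
      _ = 1 - R := by rw [hRR, sub_self, sub_zero]
    rw [← hsq]
    exact posSemidef_conjTranspose_mul_self _
  have hfinal : S * (1 - R) * Sᴴ = Z - A := by
    rw [hSpsd.isHermitian.eq]
    calc S * (1 - R) * S = S * S - (S * S⁻¹) * A * (S⁻¹ * S) := by
          rw [hRdef]; noncomm_ring
    _ = Z - A := by rw [hSS, hSi, hiS, one_mul, mul_one]
  have := hone.mul_mul_conjTranspose_same S
  rw [hfinal] at this
  exact this
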